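/- There exists a finite constant C > 0, depending only on A₂, ρ₄, ρ₅, ρ₆, c_K, ϑ₁, ϑ₂, ϑ₃ and the uniform bounds on the kernels, such that for all positive integers S₁, S₂, T, B_{S₁}, B_{S₂}, B_T: sup_{θ∈Θ} |m(θ) − σ(θ)| ≤ C · max{ B_{S₁}^{−ϑ₁}, B_{S₂}^{−ϑ₂}, B_T^{−ϑ₃}, S₁^{−1}, S₂^{−1}, T^{−1} }. -/

import Mathlib

open Complex

noncomputable section

/-- Inner product of a spatio-temporal shift `h ∈ ℤ³` with a frequency `θ`. -/
def zdot (h : ℤ × ℤ × ℤ) (θ : Fin 3 → ℝ) : ℝ :=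
  h.1 * θ 0 + h.2.1 * θ 1 + h.2.2 * θ 2

/-- The frequency cube Θ = [−π,π)³. -/
def Theta : Set (Fin 3 → ℝ) := Set.univ.pi fun _ => Set.Ico (-Real.pi) Real.pi

/-- helper: geometric decay majorant -/
def auxρ (ρ₄ ρ₅ ρ₆ : ℝ) (h : ℤ × ℤ × ℤ) : ℝ :=
  ρ₄ ^ h.1.natAbs * (ρ₅ ^ h.2.1.natAbs * ρ₆ ^ h.2.2.natAbs)

/-- helper: polynomial weight -/
def auxP (cK' ϑ₁ ϑ₂ ϑ₃ : ℝ) (h : ℤ × ℤ × ℤ) : ℝ :=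
  ((h.1.natAbs : ℝ) + (h.2.1.natAbs : ℝ) + (h.2.2.natAbs : ℝ)) +
    cK' * ((h.1.natAbs : ℝ) ^ ϑ₁ + (h.2.1.natAbs : ℝ) ^ ϑ₂ + (h.2.2.natAbs : ℝ) ^ ϑ₃)

lemma aux_abs_one_sub_mul (a b : ℝ) : |1 - a * b| ≤ |1 - a| + |a| * |1 - b| := by
  have h : 1 - a * b = (1 - a) + a * (1 - b) := by ring
  rw [h]
  exact (abs_add_le _ _).trans (by rw [abs_mul])

lemma aux_summable_geom {ρ : ℝ} (h0 : 0 < ρ) (h1 : ρ < 1) :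
    Summable (fun n : ℤ => ρ ^ n.natAbs) := by
  have hs : Summable (fun n : ℕ => ρ ^ n) := summable_geometric_of_lt_one h0.le h1
  refine Summable.of_nat_of_neg (by simpa using hs) ?_
  simpa using hs

lemma aux_summable_rpow_geom {ρ : ℝ} (h0 : 0 < ρ) (h1 : ρ < 1) {t : ℝ} (ht : 0 < t) :
    Summable (fun n : ℤ => ((n.natAbs : ℝ)) ^ t * ρ ^ n.natAbs) := by
  have key : Summable (fun n : ℕ => ((n : ℝ)) ^ t * ρ ^ n) := by
    set k := ⌈t⌉₊ with hk
    have hg : Summable (fun n : ℕ => ((n : ℝ)) ^ k * ρ ^ n) :=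
      summable_pow_mul_geometric_of_norm_lt_one k (by rwa [Real.norm_eq_abs, abs_of_pos h0])
    refine Summable.of_nonneg_of_le (fun n => ?_) (fun n => ?_) hg
    · positivity
    · rcases Nat.eq_zero_or_pos n with rfl | hn
      · simp only [Nat.cast_zero, Real.zero_rpow ht.ne', zero_mul, pow_zero, mul_one]
        positivity
      · have h1n : (1 : ℝ) ≤ (n : ℝ) := by exact_mod_cast hn
        have : ((n : ℝ)) ^ t ≤ ((n : ℝ)) ^ (k : ℝ) :=
          Real.rpow_le_rpow_of_exponent_le h1n (Nat.le_ceil t)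
        rw [Real.rpow_natCast] at this
        exact mul_le_mul_of_nonneg_right this (by positivity)
  refine Summable.of_nat_of_neg (by simpa using key) ?_
  simpa using key

lemma aux_telescope (t₁ t₂ t₃ k₁ k₂ k₃ M' : ℝ) (h1 : |t₁| ≤ 1) (h2 : |t₂| ≤ 1)
    (h3 : |t₃| ≤ 1) (hM : 1 ≤ M') (hk1 : |k₁| ≤ M') (hk2 : |k₂| ≤ M') :
    |1 - t₁ * t₂ * t₃ * k₁ * k₂ * k₃| ≤
      M' ^ 2 * (|1 - t₁| + |1 - t₂| + |1 - t₃| + |1 - k₁| + |1 - k₂| + |1 - k₃|) := by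
  have e6 : |1 - k₂ * k₃| ≤ |1 - k₂| + M' * |1 - k₃| := by
    refine (aux_abs_one_sub_mul k₂ k₃).trans ?_
    have := abs_nonneg (1 - k₃)
    nlinarith
  have e5 : |1 - k₁ * (k₂ * k₃)| ≤ |1 - k₁| + M' * |1 - k₂| + M' ^ 2 * |1 - k₃| := by
    refine (aux_abs_one_sub_mul k₁ (k₂ * k₃)).trans ?_
    have h := mul_le_mul_of_nonneg_left e6 (abs_nonneg k₁)
    have h2' : |k₁| * (|1 - k₂| + M' * |1 - k₃|) ≤ M' * (|1 - k₂| + M' * |1 - k₃|) := by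
      have : 0 ≤ |1 - k₂| + M' * |1 - k₃| := by
        have := abs_nonneg (1 - k₂); have := abs_nonneg (1 - k₃); nlinarith
      nlinarith
    nlinarith [abs_nonneg (1 - k₂), abs_nonneg (1 - k₃)]
  have e4 : |1 - t₃ * (k₁ * (k₂ * k₃))| ≤
      |1 - t₃| + |1 - k₁| + M' * |1 - k₂| + M' ^ 2 * |1 - k₃| := by
    refine (aux_abs_one_sub_mul t₃ _).trans ?_
    have h := mul_le_mul_of_nonneg_right h3 (abs_nonneg (1 - k₁ * (k₂ * k₃)))
    nlinarith [abs_nonneg (1 - k₁ * (k₂ * k₃))]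
  have e3 : |1 - t₂ * (t₃ * (k₁ * (k₂ * k₃)))| ≤
      |1 - t₂| + |1 - t₃| + |1 - k₁| + M' * |1 - k₂| + M' ^ 2 * |1 - k₃| := by
    refine (aux_abs_one_sub_mul t₂ _).trans ?_
    have h := mul_le_mul_of_nonneg_right h2 (abs_nonneg (1 - t₃ * (k₁ * (k₂ * k₃))))
    nlinarith [abs_nonneg (1 - t₃ * (k₁ * (k₂ * k₃)))]
  have e2 : |1 - t₁ * (t₂ * (t₃ * (k₁ * (k₂ * k₃))))| ≤
      |1 - t₁| + |1 - t₂| + |1 - t₃| + |1 - k₁| + M' * |1 - k₂| + M' ^ 2 * |1 - k₃| := by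
    refine (aux_abs_one_sub_mul t₁ _).trans ?_
    have h := mul_le_mul_of_nonneg_right h1 (abs_nonneg (1 - t₂ * (t₃ * (k₁ * (k₂ * k₃)))))
    nlinarith [abs_nonneg (1 - t₂ * (t₃ * (k₁ * (k₂ * k₃))))]
  have hre : t₁ * t₂ * t₃ * k₁ * k₂ * k₃ = t₁ * (t₂ * (t₃ * (k₁ * (k₂ * k₃)))) := by ring
  rw [hre]
  refine e2.trans ?_
  have hM2 : (0:ℝ) ≤ M' ^ 2 - 1 := by nlinarith
  have hMM : (0:ℝ) ≤ M' ^ 2 - M' := by nlinarith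
  nlinarith [mul_nonneg hM2 (abs_nonneg (1 - t₁)), mul_nonneg hM2 (abs_nonneg (1 - t₂)),
    mul_nonneg hM2 (abs_nonneg (1 - t₃)), mul_nonneg hM2 (abs_nonneg (1 - k₁)),
    mul_nonneg hMM (abs_nonneg (1 - k₂))]

lemma aux_kernel_bound (K : ℝ → ℝ) (ϑ cK' : ℝ) (hϑ : 0 < ϑ) (hcK' : 1 ≤ cK')
    (hsupp : ∀ u, 1 < |u| → K u = 0)
    (hhol : ∀ u ∈ Set.Icc (-1 : ℝ) 1, |K u - 1| ≤ cK' * |u| ^ ϑ)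
    (h : ℤ) (B : ℕ) (hB : 0 < B) (Mb : ℝ) (hMb : (B : ℝ) ^ (-ϑ) ≤ Mb) :
    |1 - K ((h : ℝ) / B)| ≤ cK' * ((h.natAbs : ℝ) ^ ϑ * Mb) := by
  have hb : (0:ℝ) < B := by exact_mod_cast hB
  have hcn : ((h.natAbs : ℝ)) = |(h:ℝ)| := by rw [Nat.cast_natAbs, Int.cast_abs]
  have hn : (0:ℝ) ≤ (h.natAbs : ℝ) := Nat.cast_nonneg _
  have habs : |(h:ℝ)/B| = (h.natAbs : ℝ) / B := by
    rw [abs_div, abs_of_pos hb, hcn]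
  have hrw : ((h.natAbs : ℝ) / B) ^ ϑ = (h.natAbs : ℝ) ^ ϑ * (B:ℝ) ^ (-ϑ) := by
    rw [Real.div_rpow hn hb.le, Real.rpow_neg hb.le, div_eq_mul_inv]
  have hBneg : (0:ℝ) < (B:ℝ)^(-ϑ) := Real.rpow_pos_of_pos hb _
  have hrnn : (0:ℝ) ≤ (h.natAbs : ℝ) ^ ϑ := Real.rpow_nonneg hn ϑ
  by_cases hc : h.natAbs ≤ B
  · have hu1 : |(h:ℝ)/B| ≤ 1 := by
      rw [habs, div_le_one hb]; exact_mod_cast hc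
    have hu : (h:ℝ)/B ∈ Set.Icc (-1:ℝ) 1 := by
      rw [Set.mem_Icc]; exact abs_le.mp hu1
    calc |1 - K ((h:ℝ)/B)| = |K ((h:ℝ)/B) - 1| := abs_sub_comm _ _
      _ ≤ cK' * |(h:ℝ)/B| ^ ϑ := hhol _ hu
      _ = cK' * ((h.natAbs : ℝ) ^ ϑ * (B:ℝ)^(-ϑ)) := by rw [habs, hrw]
      _ ≤ cK' * ((h.natAbs : ℝ) ^ ϑ * Mb) := by
          have h2 : (h.natAbs : ℝ)^ϑ * (B:ℝ)^(-ϑ) ≤ (h.natAbs : ℝ)^ϑ * Mb :=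
            mul_le_mul_of_nonneg_left hMb hrnn
          exact mul_le_mul_of_nonneg_left h2 (by linarith)
  · push_neg at hc
    have h1 : 1 < |(h:ℝ)/B| := by
      rw [habs, lt_div_iff₀ hb, one_mul]; exact_mod_cast hc
    rw [hsupp _ h1, sub_zero, abs_one]
    have hge : (1:ℝ) ≤ (h.natAbs : ℝ) / B := by
      rw [le_div_iff₀ hb, one_mul]; exact_mod_cast hc.le
    have h2 : (1:ℝ) ≤ ((h.natAbs : ℝ)/B)^ϑ := by
      calc (1:ℝ) = ((h.natAbs : ℝ)/B)^(0:ℝ) := (Real.rpow_zero _).symm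
        _ ≤ ((h.natAbs : ℝ)/B)^ϑ := Real.rpow_le_rpow_of_exponent_le hge hϑ.le
    rw [hrw] at h2
    calc (1:ℝ) ≤ (h.natAbs : ℝ)^ϑ * (B:ℝ)^(-ϑ) := h2
      _ ≤ (h.natAbs : ℝ)^ϑ * Mb := mul_le_mul_of_nonneg_left hMb hrnn
      _ ≤ cK' * ((h.natAbs : ℝ)^ϑ * Mb) :=
          le_mul_of_one_le_left (by nlinarith) hcK'

set_option maxHeartbeats 4000000 in
/-- deterministic bias bound.  If `Γ : ℤ³ → ℂ` decays geometrically,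
`σ(θ) = Σ_h Γ(h) e^{−i⟨h,θ⟩}`, the kernels `K_l` are bounded, supported in `[−1,1]`,
with `K_l(0) = 1` and `|K_l(u) − 1| ≤ c_K |u|^{ϑ_l}`, and `m(θ)` is the triangularly
weighted, kernel-smoothed finite sum, then there is a constant `C > 0` depending only on
the stated constants such that for all sizes and bandwidths,
`sup_{θ∈Θ} |m(θ) − σ(θ)| ≤ C · max{B_{S₁}^{−ϑ₁}, B_{S₂}^{−ϑ₂}, B_T^{−ϑ₃}, S₁⁻¹, S₂⁻¹, T⁻¹}`. -/
theorem stmt_16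
    (Γ : ℤ × ℤ × ℤ → ℂ) (A₂ ρ₄ ρ₅ ρ₆ : ℝ) (hA₂ : 0 < A₂)
    (hρ₄ : ρ₄ ∈ Set.Ioo (0 : ℝ) 1) (hρ₅ : ρ₅ ∈ Set.Ioo (0 : ℝ) 1)
    (hρ₆ : ρ₆ ∈ Set.Ioo (0 : ℝ) 1)
    (hΓ : ∀ h : ℤ × ℤ × ℤ,
      ‖Γ h‖ ≤ A₂ * ρ₄ ^ h.1.natAbs * ρ₅ ^ h.2.1.natAbs * ρ₆ ^ h.2.2.natAbs)
    (K₁ K₂ K₃ : ℝ → ℝ) (ϑ₁ ϑ₂ ϑ₃ cK : ℝ)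
    (hϑ₁ : 0 < ϑ₁) (hϑ₂ : 0 < ϑ₂) (hϑ₃ : 0 < ϑ₃) (hcK : 0 < cK)
    (hKnn : ∀ u, 0 ≤ K₁ u ∧ 0 ≤ K₂ u ∧ 0 ≤ K₃ u)
    (MK : ℝ) (hKbd : ∀ u, K₁ u ≤ MK ∧ K₂ u ≤ MK ∧ K₃ u ≤ MK)
    (hKsupp : ∀ u, 1 < |u| → K₁ u = 0 ∧ K₂ u = 0 ∧ K₃ u = 0)
    (hK0 : K₁ 0 = 1 ∧ K₂ 0 = 1 ∧ K₃ 0 = 1)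
    (hKhol : ∀ u ∈ Set.Icc (-1 : ℝ) 1,
      |K₁ u - 1| ≤ cK * |u| ^ ϑ₁ ∧ |K₂ u - 1| ≤ cK * |u| ^ ϑ₂ ∧ |K₃ u - 1| ≤ cK * |u| ^ ϑ₃)
    (σ : (Fin 3 → ℝ) → ℂ)
    (hσ : ∀ θ, σ θ = ∑' h : ℤ × ℤ × ℤ, Γ h * Complex.exp (-(Complex.I * (zdot h θ : ℝ))))
    (m : ℕ → ℕ → ℕ → ℕ → ℕ → ℕ → (Fin 3 → ℝ) → ℂ)
    (hm : ∀ (S₁ S₂ T B₁ B₂ B₃ : ℕ) (θ : Fin 3 → ℝ),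
      m S₁ S₂ T B₁ B₂ B₃ θ =
        ∑ h₁ ∈ Finset.Icc (1 - (S₁ : ℤ)) ((S₁ : ℤ) - 1),
        ∑ h₂ ∈ Finset.Icc (1 - (S₂ : ℤ)) ((S₂ : ℤ) - 1),
        ∑ h₃ ∈ Finset.Icc (1 - (T : ℤ)) ((T : ℤ) - 1),
          (((1 - |(h₁ : ℝ)| / S₁) * (1 - |(h₂ : ℝ)| / S₂) * (1 - |(h₃ : ℝ)| / T) *
            K₁ ((h₁ : ℝ) / B₁) * K₂ ((h₂ : ℝ) / B₂) * K₃ ((h₃ : ℝ) / B₃) : ℝ) : ℂ) *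
            Γ (h₁, h₂, h₃) *
            Complex.exp (-(Complex.I * (zdot (h₁, h₂, h₃) θ : ℝ)))) :
    ∃ C > 0, ∀ (S₁ S₂ T B₁ B₂ B₃ : ℕ),
      0 < S₁ → 0 < S₂ → 0 < T → 0 < B₁ → 0 < B₂ → 0 < B₃ →
      ∀ θ ∈ Theta,
        ‖m S₁ S₂ T B₁ B₂ B₃ θ - σ θ‖ ≤
          C * max (max (max ((B₁ : ℝ) ^ (-ϑ₁)) ((B₂ : ℝ) ^ (-ϑ₂)))
                    (max ((B₃ : ℝ) ^ (-ϑ₃)) ((S₁ : ℝ)⁻¹)))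
                  (max ((S₂ : ℝ)⁻¹) ((T : ℝ)⁻¹)) := by
  classical
  obtain ⟨hρ₄0, hρ₄1⟩ := hρ₄
  obtain ⟨hρ₅0, hρ₅1⟩ := hρ₅
  obtain ⟨hρ₆0, hρ₆1⟩ := hρ₆
  set Mp : ℝ := max 1 MK with hMp_def
  set cK' : ℝ := max 1 cK with hcK'_def
  have hMp1 : (1:ℝ) ≤ Mp := le_max_left _ _
  have hMpsq1 : (1:ℝ) ≤ Mp ^ 2 := by nlinarith
  have hcK'1 : (1:ℝ) ≤ cK' := le_max_left _ _
  have hcK'0 : (0:ℝ) ≤ cK' := by linarith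
  -- nonnegativity of the majorants
  have hρnn : ∀ h : ℤ × ℤ × ℤ, 0 ≤ auxρ ρ₄ ρ₅ ρ₆ h := fun h =>
    mul_nonneg (pow_nonneg hρ₄0.le _)
      (mul_nonneg (pow_nonneg hρ₅0.le _) (pow_nonneg hρ₆0.le _))
  have hPnn : ∀ h : ℤ × ℤ × ℤ, 0 ≤ auxP cK' ϑ₁ ϑ₂ ϑ₃ h := by
    intro h
    have r1 : (0:ℝ) ≤ ((h.1.natAbs : ℝ)) ^ ϑ₁ := Real.rpow_nonneg (Nat.cast_nonneg _) _
    have r2 : (0:ℝ) ≤ ((h.2.1.natAbs : ℝ)) ^ ϑ₂ := Real.rpow_nonneg (Nat.cast_nonneg _) _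
    have r3 : (0:ℝ) ≤ ((h.2.2.natAbs : ℝ)) ^ ϑ₃ := Real.rpow_nonneg (Nat.cast_nonneg _) _
    have := mul_nonneg hcK'0 (by linarith : (0:ℝ) ≤ ((h.1.natAbs : ℝ)) ^ ϑ₁ +
      ((h.2.1.natAbs : ℝ)) ^ ϑ₂ + ((h.2.2.natAbs : ℝ)) ^ ϑ₃)
    have c1 : (0:ℝ) ≤ (h.1.natAbs : ℝ) := Nat.cast_nonneg _
    have c2 : (0:ℝ) ≤ (h.2.1.natAbs : ℝ) := Nat.cast_nonneg _
    have c3 : (0:ℝ) ≤ (h.2.2.natAbs : ℝ) := Nat.cast_nonneg _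
    simp only [auxP]; linarith
  -- summability of the majorants
  have s4 := aux_summable_geom hρ₄0 hρ₄1
  have s5 := aux_summable_geom hρ₅0 hρ₅1
  have s6 := aux_summable_geom hρ₆0 hρ₆1
  have s56 : Summable (fun p : ℤ × ℤ => ρ₅ ^ p.1.natAbs * ρ₆ ^ p.2.natAbs) :=
    s5.mul_of_nonneg s6 (fun n => pow_nonneg hρ₅0.le _) (fun n => pow_nonneg hρ₆0.le _)
  have hρsum : Summable (auxρ ρ₄ ρ₅ ρ₆) :=
    s4.mul_of_nonneg s56 (fun n => pow_nonneg hρ₄0.le _)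
      (fun p => mul_nonneg (pow_nonneg hρ₅0.le _) (pow_nonneg hρ₆0.le _))
  have w4 : Summable (fun n : ℤ => (n.natAbs : ℝ) * ρ₄ ^ n.natAbs) := by
    simpa using aux_summable_rpow_geom hρ₄0 hρ₄1 one_pos
  have w5 : Summable (fun n : ℤ => (n.natAbs : ℝ) * ρ₅ ^ n.natAbs) := by
    simpa using aux_summable_rpow_geom hρ₅0 hρ₅1 one_pos
  have w6 : Summable (fun n : ℤ => (n.natAbs : ℝ) * ρ₆ ^ n.natAbs) := by
    simpa using aux_summable_rpow_geom hρ₆0 hρ₆1 one_pos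
  have r4 := aux_summable_rpow_geom hρ₄0 hρ₄1 hϑ₁
  have r5 := aux_summable_rpow_geom hρ₅0 hρ₅1 hϑ₂
  have r6 := aux_summable_rpow_geom hρ₆0 hρ₆1 hϑ₃
  have nn4 : ∀ n : ℤ, (0:ℝ) ≤ ρ₄ ^ n.natAbs := fun n => pow_nonneg hρ₄0.le _
  have nn5 : ∀ n : ℤ, (0:ℝ) ≤ ρ₅ ^ n.natAbs := fun n => pow_nonneg hρ₅0.le _
  have nn6 : ∀ n : ℤ, (0:ℝ) ≤ ρ₆ ^ n.natAbs := fun n => pow_nonneg hρ₆0.le _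
  have p1 : Summable (fun h : ℤ × ℤ × ℤ =>
      ((h.1.natAbs : ℝ) * ρ₄ ^ h.1.natAbs) * (ρ₅ ^ h.2.1.natAbs * ρ₆ ^ h.2.2.natAbs)) :=
    w4.mul_of_nonneg s56 (fun n => mul_nonneg (Nat.cast_nonneg _) (nn4 n))
      (fun p => mul_nonneg (nn5 p.1) (nn6 p.2))
  have p2 : Summable (fun h : ℤ × ℤ × ℤ =>
      ρ₄ ^ h.1.natAbs * (((h.2.1.natAbs : ℝ) * ρ₅ ^ h.2.1.natAbs) * ρ₆ ^ h.2.2.natAbs)) :=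
    s4.mul_of_nonneg
      (w5.mul_of_nonneg s6 (fun n => mul_nonneg (Nat.cast_nonneg _) (nn5 n)) nn6)
      nn4 (fun p => mul_nonneg (mul_nonneg (Nat.cast_nonneg _) (nn5 p.1)) (nn6 p.2))
  have p3 : Summable (fun h : ℤ × ℤ × ℤ =>
      ρ₄ ^ h.1.natAbs * (ρ₅ ^ h.2.1.natAbs * ((h.2.2.natAbs : ℝ) * ρ₆ ^ h.2.2.natAbs))) :=
    s4.mul_of_nonneg
      (s5.mul_of_nonneg w6 nn5 (fun n => mul_nonneg (Nat.cast_nonneg _) (nn6 n)))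
      nn4 (fun p => mul_nonneg (nn5 p.1) (mul_nonneg (Nat.cast_nonneg _) (nn6 p.2)))
  have q1 : Summable (fun h : ℤ × ℤ × ℤ =>
      ((h.1.natAbs : ℝ) ^ ϑ₁ * ρ₄ ^ h.1.natAbs) * (ρ₅ ^ h.2.1.natAbs * ρ₆ ^ h.2.2.natAbs)) :=
    r4.mul_of_nonneg s56
      (fun n => mul_nonneg (Real.rpow_nonneg (Nat.cast_nonneg _) _) (nn4 n))
      (fun p => mul_nonneg (nn5 p.1) (nn6 p.2))
  have q2 : Summable (fun h : ℤ × ℤ × ℤ =>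
      ρ₄ ^ h.1.natAbs * (((h.2.1.natAbs : ℝ) ^ ϑ₂ * ρ₅ ^ h.2.1.natAbs) * ρ₆ ^ h.2.2.natAbs)) :=
    s4.mul_of_nonneg
      (r5.mul_of_nonneg s6
        (fun n => mul_nonneg (Real.rpow_nonneg (Nat.cast_nonneg _) _) (nn5 n)) nn6)
      nn4 (fun p => mul_nonneg
        (mul_nonneg (Real.rpow_nonneg (Nat.cast_nonneg _) _) (nn5 p.1)) (nn6 p.2))
  have q3 : Summable (fun h : ℤ × ℤ × ℤ =>
      ρ₄ ^ h.1.natAbs * (ρ₅ ^ h.2.1.natAbs * ((h.2.2.natAbs : ℝ) ^ ϑ₃ * ρ₆ ^ h.2.2.natAbs))) :=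
    s4.mul_of_nonneg
      (s5.mul_of_nonneg r6 nn5
        (fun n => mul_nonneg (Real.rpow_nonneg (Nat.cast_nonneg _) _) (nn6 n)))
      nn4 (fun p => mul_nonneg (nn5 p.1)
        (mul_nonneg (Real.rpow_nonneg (Nat.cast_nonneg _) _) (nn6 p.2)))
  have hPρ : Summable (fun h : ℤ × ℤ × ℤ => auxP cK' ϑ₁ ϑ₂ ϑ₃ h * auxρ ρ₄ ρ₅ ρ₆ h) := by
    have hsum := ((p1.add p2).add p3).add (((q1.add q2).add q3).mul_left cK')
    refine hsum.congr fun h => ?_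
    simp only [auxP, auxρ]
    ring
  set T₀ : ℝ := ∑' h : ℤ × ℤ × ℤ, auxP cK' ϑ₁ ϑ₂ ϑ₃ h * auxρ ρ₄ ρ₅ ρ₆ h with hT₀_def
  have hT₀0 : 0 ≤ T₀ := tsum_nonneg fun h => mul_nonneg (hPnn h) (hρnn h)
  refine ⟨A₂ * Mp ^ 2 * (1 + T₀), mul_pos (mul_pos hA₂ (lt_of_lt_of_le one_pos hMpsq1)) (by linarith), ?_⟩
  intro S₁ S₂ T B₁ B₂ B₃ hS₁ hS₂ hT hB₁ hB₂ hB₃ θ hθ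
  have hS₁R : (0:ℝ) < S₁ := by exact_mod_cast hS₁
  have hS₂R : (0:ℝ) < S₂ := by exact_mod_cast hS₂
  have hTR : (0:ℝ) < T := by exact_mod_cast hT
  set M : ℝ := max (max (max ((B₁ : ℝ) ^ (-ϑ₁)) ((B₂ : ℝ) ^ (-ϑ₂)))
      (max ((B₃ : ℝ) ^ (-ϑ₃)) ((S₁ : ℝ)⁻¹))) (max ((S₂ : ℝ)⁻¹) ((T : ℝ)⁻¹)) with hM_def
  have hMB₁ : ((B₁:ℝ) ^ (-ϑ₁)) ≤ M :=
    (le_max_left _ _).trans ((le_max_left _ _).trans (le_max_left _ _))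
  have hMB₂ : ((B₂:ℝ) ^ (-ϑ₂)) ≤ M :=
    (le_max_right _ _).trans ((le_max_left _ _).trans (le_max_left _ _))
  have hMB₃ : ((B₃:ℝ) ^ (-ϑ₃)) ≤ M :=
    (le_max_left _ _).trans ((le_max_right _ _).trans (le_max_left _ _))
  have hMS₁ : ((S₁:ℝ)⁻¹) ≤ M :=
    (le_max_right _ _).trans ((le_max_right _ _).trans (le_max_left _ _))
  have hMS₂ : ((S₂:ℝ)⁻¹) ≤ M := (le_max_left _ _).trans (le_max_right _ _)
  have hMT : ((T:ℝ)⁻¹) ≤ M := (le_max_right _ _).trans (le_max_right _ _)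
  have hM0 : 0 < M := lt_of_lt_of_le (inv_pos.mpr hS₂R) hMS₂
  -- the box and weight
  set box : Finset (ℤ × ℤ × ℤ) := (Finset.Icc (1 - (S₁ : ℤ)) ((S₁ : ℤ) - 1)) ×ˢ
      ((Finset.Icc (1 - (S₂ : ℤ)) ((S₂ : ℤ) - 1)) ×ˢ
        (Finset.Icc (1 - (T : ℤ)) ((T : ℤ) - 1))) with hbox_def
  set W : ℤ × ℤ × ℤ → ℝ := fun h =>
    (1 - |(h.1 : ℝ)| / S₁) * (1 - |(h.2.1 : ℝ)| / S₂) * (1 - |(h.2.2 : ℝ)| / T) *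
      K₁ ((h.1 : ℝ) / B₁) * K₂ ((h.2.1 : ℝ) / B₂) * K₃ ((h.2.2 : ℝ) / B₃) with hW_def
  -- norm of the exponential
  have hEnorm : ∀ h : ℤ × ℤ × ℤ,
      ‖Complex.exp (-(Complex.I * ((zdot h θ : ℝ) : ℂ)))‖ = 1 := by
    intro h
    have hrot : (-(Complex.I * ((zdot h θ : ℝ) : ℂ))) = ((-(zdot h θ) : ℝ) : ℂ) * Complex.I := by
      push_cast; ring
    rw [hrot, Complex.norm_exp_ofReal_mul_I]
  -- summability of the series
  have hΓ' : ∀ h : ℤ × ℤ × ℤ, ‖Γ h‖ ≤ A₂ * auxρ ρ₄ ρ₅ ρ₆ h := by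
    intro h
    refine (hΓ h).trans (le_of_eq ?_)
    simp only [auxρ]; ring
  have hΓE : Summable (fun h : ℤ × ℤ × ℤ =>
      Γ h * Complex.exp (-(Complex.I * ((zdot h θ : ℝ) : ℂ)))) := by
    apply Summable.of_norm
    refine Summable.of_nonneg_of_le (fun h => norm_nonneg _) (fun h => ?_) (hρsum.mul_left A₂)
    rw [norm_mul, hEnorm h, mul_one]
    exact hΓ' h
  have hgzero : ∀ h ∉ box,
      (((if h ∈ box then W h else 0 : ℝ)) : ℂ) *
        (Γ h * Complex.exp (-(Complex.I * ((zdot h θ : ℝ) : ℂ)))) = 0 := by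
    intro h hh
    rw [if_neg hh]
    simp
  have hgE : Summable (fun h : ℤ × ℤ × ℤ =>
      (((if h ∈ box then W h else 0 : ℝ)) : ℂ) *
        (Γ h * Complex.exp (-(Complex.I * ((zdot h θ : ℝ) : ℂ))))) :=
    summable_of_ne_finset_zero (s := box) hgzero
  -- identification of m with a tsum
  have hm1 : m S₁ S₂ T B₁ B₂ B₃ θ = ∑' h : ℤ × ℤ × ℤ,
      (((if h ∈ box then W h else 0 : ℝ)) : ℂ) *
        (Γ h * Complex.exp (-(Complex.I * ((zdot h θ : ℝ) : ℂ)))) := by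
    rw [tsum_eq_sum (s := box) hgzero, hm]
    rw [Finset.sum_product]
    refine Finset.sum_congr rfl fun h₁ hh₁ => ?_
    rw [Finset.sum_product]
    refine Finset.sum_congr rfl fun h₂ hh₂ => ?_
    refine Finset.sum_congr rfl fun h₃ hh₃ => ?_
    have hmem : ((h₁, h₂, h₃) : ℤ × ℤ × ℤ) ∈ box :=
      Finset.mem_product.mpr ⟨hh₁, Finset.mem_product.mpr ⟨hh₂, hh₃⟩⟩
    rw [if_pos hmem]
    simp only [hW_def]
    push_cast
    ring
  -- difference as a tsum
  have hdiff : m S₁ S₂ T B₁ B₂ B₃ θ - σ θ = ∑' h : ℤ × ℤ × ℤ,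
      ((((if h ∈ box then W h else 0 : ℝ)) : ℂ) - 1) *
        (Γ h * Complex.exp (-(Complex.I * ((zdot h θ : ℝ) : ℂ)))) := by
    rw [hm1, hσ θ, ← Summable.tsum_sub hgE hΓE]
    exact tsum_congr fun h => by ring
  -- the key pointwise bound on the weight
  have hcb : ∀ h : ℤ × ℤ × ℤ,
      |(if h ∈ box then W h else 0) - 1| ≤ Mp ^ 2 * (M * auxP cK' ϑ₁ ϑ₂ ϑ₃ h) := by
    intro h
    have hab1 : |(h.1 : ℝ)| = (h.1.natAbs : ℝ) := by rw [Nat.cast_natAbs, Int.cast_abs]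
    have hab2 : |(h.2.1 : ℝ)| = (h.2.1.natAbs : ℝ) := by rw [Nat.cast_natAbs, Int.cast_abs]
    have hab3 : |(h.2.2 : ℝ)| = (h.2.2.natAbs : ℝ) := by rw [Nat.cast_natAbs, Int.cast_abs]
    have c1 : (0:ℝ) ≤ (h.1.natAbs : ℝ) := Nat.cast_nonneg _
    have c2 : (0:ℝ) ≤ (h.2.1.natAbs : ℝ) := Nat.cast_nonneg _
    have c3 : (0:ℝ) ≤ (h.2.2.natAbs : ℝ) := Nat.cast_nonneg _
    have r1 : (0:ℝ) ≤ ((h.1.natAbs : ℝ)) ^ ϑ₁ := Real.rpow_nonneg c1 _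
    have r2 : (0:ℝ) ≤ ((h.2.1.natAbs : ℝ)) ^ ϑ₂ := Real.rpow_nonneg c2 _
    have r3 : (0:ℝ) ≤ ((h.2.2.natAbs : ℝ)) ^ ϑ₃ := Real.rpow_nonneg c3 _
    have hPge1 : (h.1.natAbs : ℝ) ≤ auxP cK' ϑ₁ ϑ₂ ϑ₃ h := by
      have := mul_nonneg hcK'0 (by linarith : (0:ℝ) ≤ ((h.1.natAbs : ℝ)) ^ ϑ₁ +
        ((h.2.1.natAbs : ℝ)) ^ ϑ₂ + ((h.2.2.natAbs : ℝ)) ^ ϑ₃)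
      simp only [auxP]; linarith
    have hPge2 : (h.2.1.natAbs : ℝ) ≤ auxP cK' ϑ₁ ϑ₂ ϑ₃ h := by
      have := mul_nonneg hcK'0 (by linarith : (0:ℝ) ≤ ((h.1.natAbs : ℝ)) ^ ϑ₁ +
        ((h.2.1.natAbs : ℝ)) ^ ϑ₂ + ((h.2.2.natAbs : ℝ)) ^ ϑ₃)
      simp only [auxP]; linarith
    have hPge3 : (h.2.2.natAbs : ℝ) ≤ auxP cK' ϑ₁ ϑ₂ ϑ₃ h := by
      have := mul_nonneg hcK'0 (by linarith : (0:ℝ) ≤ ((h.1.natAbs : ℝ)) ^ ϑ₁ +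
        ((h.2.1.natAbs : ℝ)) ^ ϑ₂ + ((h.2.2.natAbs : ℝ)) ^ ϑ₃)
      simp only [auxP]; linarith
    by_cases hhb : h ∈ box
    · -- inside the box
      rw [if_pos hhb]
      obtain ⟨hmem1, hmem23⟩ := Finset.mem_product.mp hhb
      obtain ⟨hmem2, hmem3⟩ := Finset.mem_product.mp hmem23
      rw [Finset.mem_Icc] at hmem1 hmem2 hmem3
      have hn1 : (h.1.natAbs : ℝ) ≤ (S₁ : ℝ) := by
        have : h.1.natAbs ≤ S₁ := by omega
        exact_mod_cast this
      have hn2 : (h.2.1.natAbs : ℝ) ≤ (S₂ : ℝ) := by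
        have : h.2.1.natAbs ≤ S₂ := by omega
        exact_mod_cast this
      have hn3 : (h.2.2.natAbs : ℝ) ≤ (T : ℝ) := by
        have : h.2.2.natAbs ≤ T := by omega
        exact_mod_cast this
      have hd1 : |(h.1 : ℝ)| / S₁ ≤ 1 := by rw [div_le_one hS₁R, hab1]; exact hn1
      have hd2 : |(h.2.1 : ℝ)| / S₂ ≤ 1 := by rw [div_le_one hS₂R, hab2]; exact hn2
      have hd3 : |(h.2.2 : ℝ)| / T ≤ 1 := by rw [div_le_one hTR, hab3]; exact hn3
      have hd1' : 0 ≤ |(h.1 : ℝ)| / S₁ := div_nonneg (abs_nonneg _) hS₁R.le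
      have hd2' : 0 ≤ |(h.2.1 : ℝ)| / S₂ := div_nonneg (abs_nonneg _) hS₂R.le
      have hd3' : 0 ≤ |(h.2.2 : ℝ)| / T := div_nonneg (abs_nonneg _) hTR.le
      have ht1 : |1 - |(h.1 : ℝ)| / S₁| ≤ 1 := abs_le.mpr ⟨by linarith, by linarith⟩
      have ht2 : |1 - |(h.2.1 : ℝ)| / S₂| ≤ 1 := abs_le.mpr ⟨by linarith, by linarith⟩
      have ht3 : |1 - |(h.2.2 : ℝ)| / T| ≤ 1 := abs_le.mpr ⟨by linarith, by linarith⟩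
      have hk1bd : |K₁ ((h.1 : ℝ) / B₁)| ≤ Mp := by
        rw [_root_.abs_of_nonneg (hKnn _).1]; exact (hKbd _).1.trans (le_max_right _ _)
      have hk2bd : |K₂ ((h.2.1 : ℝ) / B₂)| ≤ Mp := by
        rw [_root_.abs_of_nonneg (hKnn _).2.1]; exact (hKbd _).2.1.trans (le_max_right _ _)
      -- deviation of the triangular weights
      have hdev1 : |1 - (1 - |(h.1 : ℝ)| / S₁)| ≤ (h.1.natAbs : ℝ) * M := by
        rw [show (1 - (1 - |(h.1 : ℝ)| / S₁)) = |(h.1 : ℝ)| / S₁ by ring,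
          _root_.abs_of_nonneg hd1', hab1, div_eq_mul_inv]
        exact mul_le_mul_of_nonneg_left hMS₁ c1
      have hdev2 : |1 - (1 - |(h.2.1 : ℝ)| / S₂)| ≤ (h.2.1.natAbs : ℝ) * M := by
        rw [show (1 - (1 - |(h.2.1 : ℝ)| / S₂)) = |(h.2.1 : ℝ)| / S₂ by ring,
          _root_.abs_of_nonneg hd2', hab2, div_eq_mul_inv]
        exact mul_le_mul_of_nonneg_left hMS₂ c2
      have hdev3 : |1 - (1 - |(h.2.2 : ℝ)| / T)| ≤ (h.2.2.natAbs : ℝ) * M := by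
        rw [show (1 - (1 - |(h.2.2 : ℝ)| / T)) = |(h.2.2 : ℝ)| / T by ring,
          _root_.abs_of_nonneg hd3', hab3, div_eq_mul_inv]
        exact mul_le_mul_of_nonneg_left hMT c3
      -- deviation of the kernels
      have hK1dev := aux_kernel_bound K₁ ϑ₁ cK' hϑ₁ hcK'1 (fun u hu => (hKsupp u hu).1)
        (fun u hu => ((hKhol u hu).1).trans
          (mul_le_mul_of_nonneg_right (le_max_right 1 cK) (by positivity)))
        h.1 B₁ hB₁ M hMB₁
      have hK2dev := aux_kernel_bound K₂ ϑ₂ cK' hϑ₂ hcK'1 (fun u hu => (hKsupp u hu).2.1)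
        (fun u hu => ((hKhol u hu).2.1).trans
          (mul_le_mul_of_nonneg_right (le_max_right 1 cK) (by positivity)))
        h.2.1 B₂ hB₂ M hMB₂
      have hK3dev := aux_kernel_bound K₃ ϑ₃ cK' hϑ₃ hcK'1 (fun u hu => (hKsupp u hu).2.2)
        (fun u hu => ((hKhol u hu).2.2).trans
          (mul_le_mul_of_nonneg_right (le_max_right 1 cK) (by positivity)))
        h.2.2 B₃ hB₃ M hMB₃
      have htel := aux_telescope (1 - |(h.1 : ℝ)| / S₁) (1 - |(h.2.1 : ℝ)| / S₂)
        (1 - |(h.2.2 : ℝ)| / T) (K₁ ((h.1 : ℝ) / B₁)) (K₂ ((h.2.1 : ℝ) / B₂))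
        (K₃ ((h.2.2 : ℝ) / B₃)) Mp ht1 ht2 ht3 hMp1 hk1bd hk2bd
      calc |W h - 1| = |1 - W h| := abs_sub_comm _ _
        _ ≤ Mp ^ 2 * (|1 - (1 - |(h.1 : ℝ)| / S₁)| + |1 - (1 - |(h.2.1 : ℝ)| / S₂)| +
            |1 - (1 - |(h.2.2 : ℝ)| / T)| + |1 - K₁ ((h.1 : ℝ) / B₁)| +
            |1 - K₂ ((h.2.1 : ℝ) / B₂)| + |1 - K₃ ((h.2.2 : ℝ) / B₃)|) := by
          simp only [hW_def]; exact htel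
        _ ≤ Mp ^ 2 * (M * auxP cK' ϑ₁ ϑ₂ ϑ₃ h) := by
          refine mul_le_mul_of_nonneg_left ?_ (by positivity)
          have hexp : M * auxP cK' ϑ₁ ϑ₂ ϑ₃ h =
              (h.1.natAbs : ℝ) * M + (h.2.1.natAbs : ℝ) * M + (h.2.2.natAbs : ℝ) * M +
              cK' * ((h.1.natAbs : ℝ) ^ ϑ₁ * M) + cK' * ((h.2.1.natAbs : ℝ) ^ ϑ₂ * M) +
              cK' * ((h.2.2.natAbs : ℝ) ^ ϑ₃ * M) := by
            simp only [auxP]; ring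
          rw [hexp]
          linarith [hdev1, hdev2, hdev3, hK1dev, hK2dev, hK3dev]
    · -- outside the box
      rw [if_neg hhb, zero_sub, abs_neg, abs_one]
      have hd : S₁ ≤ h.1.natAbs ∨ S₂ ≤ h.2.1.natAbs ∨ T ≤ h.2.2.natAbs := by
        by_contra hcon
        push_neg at hcon
        obtain ⟨d1, d2, d3⟩ := hcon
        exact hhb (Finset.mem_product.mpr ⟨Finset.mem_Icc.mpr (by omega),
          Finset.mem_product.mpr ⟨Finset.mem_Icc.mpr (by omega),
            Finset.mem_Icc.mpr (by omega)⟩⟩)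
      have hP0 : 0 ≤ auxP cK' ϑ₁ ϑ₂ ϑ₃ h := hPnn h
      rcases hd with hd | hd | hd
      · have hn : (S₁ : ℝ) ≤ (h.1.natAbs : ℝ) := by exact_mod_cast hd
        have h1 : (1:ℝ) ≤ (h.1.natAbs : ℝ) * (S₁ : ℝ)⁻¹ := by
          rw [← div_eq_mul_inv, le_div_iff₀ hS₁R, one_mul]; exact hn
        have h2 : (h.1.natAbs : ℝ) * (S₁ : ℝ)⁻¹ ≤ (h.1.natAbs : ℝ) * M :=
          mul_le_mul_of_nonneg_left hMS₁ c1
        have h3 : (h.1.natAbs : ℝ) * M ≤ auxP cK' ϑ₁ ϑ₂ ϑ₃ h * M :=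
          mul_le_mul_of_nonneg_right hPge1 hM0.le
        calc (1:ℝ) ≤ M * auxP cK' ϑ₁ ϑ₂ ϑ₃ h := by rw [mul_comm]; linarith
          _ ≤ Mp ^ 2 * (M * auxP cK' ϑ₁ ϑ₂ ϑ₃ h) :=
            le_mul_of_one_le_left (by linarith) hMpsq1
      · have hn : (S₂ : ℝ) ≤ (h.2.1.natAbs : ℝ) := by exact_mod_cast hd
        have h1 : (1:ℝ) ≤ (h.2.1.natAbs : ℝ) * (S₂ : ℝ)⁻¹ := by
          rw [← div_eq_mul_inv, le_div_iff₀ hS₂R, one_mul]; exact hn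
        have h2 : (h.2.1.natAbs : ℝ) * (S₂ : ℝ)⁻¹ ≤ (h.2.1.natAbs : ℝ) * M :=
          mul_le_mul_of_nonneg_left hMS₂ c2
        have h3 : (h.2.1.natAbs : ℝ) * M ≤ auxP cK' ϑ₁ ϑ₂ ϑ₃ h * M :=
          mul_le_mul_of_nonneg_right hPge2 hM0.le
        calc (1:ℝ) ≤ M * auxP cK' ϑ₁ ϑ₂ ϑ₃ h := by rw [mul_comm]; linarith
          _ ≤ Mp ^ 2 * (M * auxP cK' ϑ₁ ϑ₂ ϑ₃ h) :=
            le_mul_of_one_le_left (by linarith) hMpsq1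
      · have hn : (T : ℝ) ≤ (h.2.2.natAbs : ℝ) := by exact_mod_cast hd
        have h1 : (1:ℝ) ≤ (h.2.2.natAbs : ℝ) * (T : ℝ)⁻¹ := by
          rw [← div_eq_mul_inv, le_div_iff₀ hTR, one_mul]; exact hn
        have h2 : (h.2.2.natAbs : ℝ) * (T : ℝ)⁻¹ ≤ (h.2.2.natAbs : ℝ) * M :=
          mul_le_mul_of_nonneg_left hMT c3
        have h3 : (h.2.2.natAbs : ℝ) * M ≤ auxP cK' ϑ₁ ϑ₂ ϑ₃ h * M :=
          mul_le_mul_of_nonneg_right hPge3 hM0.le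
        calc (1:ℝ) ≤ M * auxP cK' ϑ₁ ϑ₂ ϑ₃ h := by rw [mul_comm]; linarith
          _ ≤ Mp ^ 2 * (M * auxP cK' ϑ₁ ϑ₂ ϑ₃ h) :=
            le_mul_of_one_le_left (by linarith) hMpsq1
  -- pointwise norm bound on the summands
  have hnorm_le : ∀ h : ℤ × ℤ × ℤ,
      ‖((((if h ∈ box then W h else 0 : ℝ)) : ℂ) - 1) *
        (Γ h * Complex.exp (-(Complex.I * ((zdot h θ : ℝ) : ℂ))))‖ ≤
      (A₂ * Mp ^ 2 * (auxP cK' ϑ₁ ϑ₂ ϑ₃ h * auxρ ρ₄ ρ₅ ρ₆ h)) * M := by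
    intro h
    have hcast : ((((if h ∈ box then W h else 0 : ℝ)) : ℂ) - 1) =
        (((if h ∈ box then W h else 0) - 1 : ℝ) : ℂ) := by push_cast; ring
    rw [norm_mul, norm_mul, hEnorm h, mul_one, hcast, Complex.norm_real, Real.norm_eq_abs]
    have hb1 := hcb h
    have hb2 := hΓ' h
    have hnn1 : (0:ℝ) ≤ Mp ^ 2 * (M * auxP cK' ϑ₁ ϑ₂ ϑ₃ h) :=
      mul_nonneg (by positivity) (mul_nonneg hM0.le (hPnn h))
    calc |(if h ∈ box then W h else 0) - 1| * ‖Γ h‖ ≤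
        (Mp ^ 2 * (M * auxP cK' ϑ₁ ϑ₂ ϑ₃ h)) * (A₂ * auxρ ρ₄ ρ₅ ρ₆ h) :=
          mul_le_mul hb1 hb2 (norm_nonneg _) hnn1
      _ = (A₂ * Mp ^ 2 * (auxP cK' ϑ₁ ϑ₂ ϑ₃ h * auxρ ρ₄ ρ₅ ρ₆ h)) * M := by ring
  have hsum2 : Summable (fun h : ℤ × ℤ × ℤ =>
      (A₂ * Mp ^ 2 * (auxP cK' ϑ₁ ϑ₂ ϑ₃ h * auxρ ρ₄ ρ₅ ρ₆ h)) * M) :=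
    (hPρ.mul_left (A₂ * Mp ^ 2)).mul_right M
  have hnsum : Summable (fun h : ℤ × ℤ × ℤ =>
      ‖((((if h ∈ box then W h else 0 : ℝ)) : ℂ) - 1) *
        (Γ h * Complex.exp (-(Complex.I * ((zdot h θ : ℝ) : ℂ))))‖) :=
    Summable.of_nonneg_of_le (fun h => norm_nonneg _) hnorm_le hsum2
  calc ‖m S₁ S₂ T B₁ B₂ B₃ θ - σ θ‖
      = ‖∑' h : ℤ × ℤ × ℤ, ((((if h ∈ box then W h else 0 : ℝ)) : ℂ) - 1) *
          (Γ h * Complex.exp (-(Complex.I * ((zdot h θ : ℝ) : ℂ))))‖ := by rw [hdiff]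
    _ ≤ ∑' h : ℤ × ℤ × ℤ, ‖((((if h ∈ box then W h else 0 : ℝ)) : ℂ) - 1) *
          (Γ h * Complex.exp (-(Complex.I * ((zdot h θ : ℝ) : ℂ))))‖ :=
        norm_tsum_le_tsum_norm hnsum
    _ ≤ ∑' h : ℤ × ℤ × ℤ, (A₂ * Mp ^ 2 * (auxP cK' ϑ₁ ϑ₂ ϑ₃ h * auxρ ρ₄ ρ₅ ρ₆ h)) * M :=
        Summable.tsum_le_tsum hnorm_le hnsum hsum2
    _ = (A₂ * Mp ^ 2 * T₀) * M := by
        rw [tsum_mul_right, tsum_mul_left]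
    _ ≤ (A₂ * Mp ^ 2 * (1 + T₀)) * M := by
        refine mul_le_mul_of_nonneg_right ?_ hM0.le
        have hpos : 0 < A₂ * Mp ^ 2 := mul_pos hA₂ (lt_of_lt_of_le one_pos hMpsq1)
        calc A₂ * Mp ^ 2 * T₀ ≤ A₂ * Mp ^ 2 * T₀ + A₂ * Mp ^ 2 := by linarith
          _ = A₂ * Mp ^ 2 * (1 + T₀) := by ring

end
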